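/- Fix n ≥ 3 and let A be the cycle compartmental matrix in the parameters a_{01}, a_{21}, a_{32}, …, a_{n,n−1}, a_{1n}, and let A_{11} be A with its first row and column deleted. Then, as polynomials in λ with coefficients in the polynomial ring in the parameters, det(λI − A) = (λ + a_{01} + a_{21}) · det(λI − A_{11}) − a_{21} · a_{32}a_{43}⋯a_{n,n−1}a_{1n}, and moreover det(λI − A_{11}) = (λ + a_{32})(λ + a_{43})⋯(λ + a_{n,n−1})(λ + a_{1n}). -/

import Mathlib

open Polynomial

/-- Index `i : Fin (m+3)` recast in `Fin (m+2)` as `i - 1`. -/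
def subOne' {m : ℕ} (i : Fin (m + 3)) : Fin (m + 2) :=
  ⟨i.val - 1, by have := i.isLt; omega⟩

/-- The cycle compartmental matrix with `n = m + 3` compartments
(`b k = a_{k+3,k+2}` for `k ≤ m`, `b (m+1) = a_{1n}`). -/
def cycMatrix {R : Type*} [CommRing R] (m : ℕ) (a01 a21 : R) (b : Fin (m + 2) → R) :
    Matrix (Fin (m + 3)) (Fin (m + 3)) R :=
  Matrix.of fun i j =>
    if i = 0 ∧ j = 0 then -a01 - a21
    else if i = 0 ∧ j.val = m + 2 then b (Fin.last (m + 1))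
    else if i.val = j.val + 1 then (if j = 0 then a21 else b (subOne' j))
    else if i = j then -(b (subOne' i))
    else 0

/-- For the `n`-compartment cycle model (`n = m + 3 ≥ 3`), as
polynomials in `λ`,
`det (λI - A) = (λ + a₀₁ + a₂₁) · det (λI - A₁₁) - a₂₁ · a₃₂a₄₃⋯a_{n,n-1}a_{1n}` and
`det (λI - A₁₁) = (λ + a₃₂)(λ + a₄₃)⋯(λ + a_{n,n-1})(λ + a_{1n})`. -/
theorem cyc_charpoly_factorization {R : Type*} [CommRing R] (m : ℕ) (a01 a21 : R)
    (b : Fin (m + 2) → R) :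
    (cycMatrix m a01 a21 b).charpoly
        = (X + C a01 + C a21) * ((cycMatrix m a01 a21 b).submatrix Fin.succ Fin.succ).charpoly
          - C (a21 * ∏ k, b k) ∧
      ((cycMatrix m a01 a21 b).submatrix Fin.succ Fin.succ).charpoly
        = ∏ k, (X + C (b k)) := by
  
  set A := cycMatrix m a01 a21 b with hA
  set A₁ := A.submatrix Fin.succ Fin.succ with hA₁
  -- entry lemmas for A
  have hAzero : ∀ i j : Fin (m + 3), i ≠ 0 → i.val ≠ j.val + 1 → i ≠ j → A i j = 0 := by
    intro i j h1 h2 h3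
    simp only [hA, cycMatrix, Matrix.of_apply]
    rw [if_neg (by tauto), if_neg (by tauto), if_neg h2, if_neg h3]
  have hArow0 : ∀ j : Fin (m + 3), j ≠ 0 → j.val ≠ m + 2 → A 0 j = 0 := by
    intro j h1 h2
    simp only [hA, cycMatrix, Matrix.of_apply]
    rw [if_neg (by tauto), if_neg (by tauto), if_neg (by simp [Fin.val_zero]),
      if_neg (by intro h; exact h1 h.symm)]
  have hAsub : ∀ i j : Fin (m + 3), i.val = j.val + 1 →
      A i j = if j = 0 then a21 else b (subOne' j) := by
    intro i j hij
    simp only [hA, cycMatrix, Matrix.of_apply]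
    rw [if_neg (by rintro ⟨h, -⟩; rw [h] at hij; simp at hij),
      if_neg (by rintro ⟨h, -⟩; rw [h] at hij; simp at hij), if_pos hij]
  have hAdiag : ∀ i : Fin (m + 3), i ≠ 0 → A i i = -(b (subOne' i)) := by
    intro i h1
    simp only [hA, cycMatrix, Matrix.of_apply]
    rw [if_neg (by tauto), if_neg (by tauto), if_neg (by omega)]
    simp
  -- Part 2 : charpoly of A₁
  have hsucc_ne : ∀ i : Fin (m + 2), (i.succ : Fin (m + 3)) ≠ 0 := fun i =>
    Fin.succ_ne_zero i
  have hsub1 : ∀ i : Fin (m + 2), subOne' i.succ = i := by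
    intro i; apply Fin.ext; simp [subOne', Fin.val_succ]
  have part2 : A₁.charpoly = ∏ k, (X + C (b k)) := by
    rw [Matrix.charpoly, Matrix.det_of_lowerTriangular]
    · apply Finset.prod_congr rfl
      intro i _
      rw [Matrix.charmatrix_apply_eq, hA₁, Matrix.submatrix_apply,
        hAdiag _ (hsucc_ne i), hsub1, map_neg, sub_neg_eq_add]
    · intro i j hij
      have hij' : (i : Fin (m + 2)) < j := hij
      rw [Matrix.charmatrix_apply_ne _ _ _ (by intro h; subst h; exact lt_irrefl _ hij'),
        hA₁, Matrix.submatrix_apply,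
        hAzero _ _ (hsucc_ne i) (by simp only [Fin.val_succ]; omega)
          (by intro h; rw [Fin.succ_inj] at h; subst h; exact lt_irrefl _ hij'), map_zero, neg_zero]
  refine ⟨?_, part2⟩
  -- Part 1
  have hdef : A.charpoly = A.charmatrix.det := rfl
  rw [hdef, Matrix.det_succ_row_zero]
  rw [← Finset.sum_erase_add Finset.univ _ (Finset.mem_univ (Fin.last (m + 2)))]
  rw [Finset.sum_eq_single_of_mem (0 : Fin (m + 3))
      (by
        rw [Finset.mem_erase]
        exact ⟨by simp [Fin.ext_iff], Finset.mem_univ _⟩)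
      (by
        intro j hj hj0
        rw [Finset.mem_erase] at hj
        have hjl : j.val ≠ m + 2 := by
          intro h; exact hj.1 (Fin.ext (by simp [h]))
        rw [Matrix.charmatrix_apply_ne _ _ _ (fun h => hj0 h.symm), hArow0 j hj0 hjl,
          map_zero, neg_zero, mul_zero, zero_mul])]
  -- first term
  have h00 : A.charmatrix 0 0 = X + C a01 + C a21 := by
    rw [Matrix.charmatrix_apply_eq]
    have : A 0 0 = -a01 - a21 := by simp [hA, cycMatrix]
    rw [this, map_sub, map_neg]; ring
  have hsubmx : A.charmatrix.submatrix Fin.succ (Fin.succAbove 0) = A₁.charmatrix := by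
    rw [Fin.succAbove_zero]
    ext i j
    by_cases h : i = j
    · subst h
      rw [Matrix.submatrix_apply, Matrix.charmatrix_apply_eq, Matrix.charmatrix_apply_eq,
        hA₁, Matrix.submatrix_apply]
    · rw [Matrix.submatrix_apply,
        Matrix.charmatrix_apply_ne _ _ _ (fun hh => h (Fin.succ_injective _ hh)),
        Matrix.charmatrix_apply_ne _ _ _ h, hA₁, Matrix.submatrix_apply]
  -- last term
  have h0last : A.charmatrix 0 (Fin.last (m + 2)) = -C (b (Fin.last (m + 1))) := by
    rw [Matrix.charmatrix_apply_ne _ _ _ (by simp [Fin.ext_iff])]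
    congr 1
    simp [hA, cycMatrix, Fin.ext_iff, -Fin.val_eq_zero_iff]
  -- the minor at the last column
  set T := A.charmatrix.submatrix Fin.succ ((Fin.last (m + 2)).succAbove) with hT
  have hTtri : T.det = ∏ i : Fin (m + 2), T i i := by
    apply Matrix.det_of_upperTriangular
    intro i j hij
    have hij' : (j : Fin (m + 2)) < i := hij
    rw [hT, Fin.succAbove_last, Matrix.submatrix_apply,
      Matrix.charmatrix_apply_ne _ _ _
        (by simp only [ne_eq, Fin.ext_iff, Fin.val_succ, Fin.coe_castSucc]; omega),
      hAzero _ _ (hsucc_ne i)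
        (by simp only [Fin.val_succ, Fin.coe_castSucc]; omega)
        (by simp only [ne_eq, Fin.ext_iff, Fin.val_succ, Fin.coe_castSucc]; omega),
      map_zero, neg_zero]
  have hTdiag : ∀ i : Fin (m + 2),
      T i i = -C (if i = 0 then a21 else b (subOne' i.castSucc)) := by
    intro i
    rw [hT, Fin.succAbove_last, Matrix.submatrix_apply,
      Matrix.charmatrix_apply_ne _ _ _
        (by simp only [ne_eq, Fin.ext_iff, Fin.val_succ, Fin.coe_castSucc]; omega),
      hAsub _ _ (by simp [Fin.val_succ])]
    congr 1
    by_cases h : i = 0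
    · subst h; simp
    · rw [if_neg (by simpa [Fin.ext_iff, -Fin.val_eq_zero_iff] using h), if_neg h]
  have hprodT : ∏ i : Fin (m + 2), T i i
      = (-1 : R[X]) ^ (m + 2) * C (a21 * ∏ i : Fin (m + 1), b i.castSucc) := by
    calc ∏ i : Fin (m + 2), T i i
        = ∏ i : Fin (m + 2), (-1 : R[X]) *
            C (if i = 0 then a21 else b (subOne' i.castSucc)) := by
          apply Finset.prod_congr rfl; intro i _; rw [hTdiag i]; ring
      _ = (-1 : R[X]) ^ (m + 2) *
            ∏ i : Fin (m + 2), C (if i = 0 then a21 else b (subOne' i.castSucc)) := by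
          rw [Finset.prod_mul_distrib, Finset.prod_const, Finset.card_univ, Fintype.card_fin]
      _ = (-1 : R[X]) ^ (m + 2) * C (a21 * ∏ i : Fin (m + 1), b i.castSucc) := by
          congr 1
          have hval : ∀ i : Fin (m + 1),
              (if (i.succ : Fin (m + 2)) = 0 then a21
                else b (subOne' (Fin.castSucc i.succ))) = b i.castSucc := by
            intro i
            rw [if_neg (Fin.succ_ne_zero i)]
            rfl
          rw [← map_prod, Fin.prod_univ_succ, if_pos rfl]
          simp only [hval]
  have hbprod : (∏ k, b k) = (∏ i : Fin (m + 1), b i.castSucc) * b (Fin.last (m + 1)) :=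
    Fin.prod_univ_castSucc b
  have hlastval : ((Fin.last (m + 2)) : Fin (m + 3)).val = m + 2 := rfl
  rw [h00, hsubmx, h0last, hlastval, hTtri, hprodT]
  have hsq : ((-1 : R[X]) ^ (m + 2)) * ((-1 : R[X]) ^ (m + 2)) = 1 := by
    rw [← pow_add]
    exact Even.neg_one_pow ⟨m + 2, rfl⟩
  have hch : A₁.charmatrix.det = A₁.charpoly := rfl
  rw [hch, hbprod]
  have hkey : (-1 : R[X]) ^ (m + 2) * (-C (b (Fin.last (m + 1)))) *
      ((-1 : R[X]) ^ (m + 2) * C (a21 * ∏ i : Fin (m + 1), b i.castSucc))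
      = -C (a21 * ((∏ i : Fin (m + 1), b i.castSucc) * b (Fin.last (m + 1)))) := by
    rw [map_mul, map_mul, map_mul]
    linear_combination (-(C (b (Fin.last (m + 1))) * (C a21 * C (∏ i : Fin (m + 1), b i.castSucc)))) * hsq
  rw [hkey, map_mul, map_mul]
  simp only [Fin.val_zero, pow_zero, one_mul]
  ring
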